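/- arXiv:math/0312308 — 4 statements merged into one kernel-verified Lean document; each statement's English description precedes it below -/
import Mathlib

section
/- Assume 𝔟 > ω₁. Let X ⊆ 2^ω with |X| = ω₁ be such that for every f : ℕ → ℕ there exists a sequence (s_n ∈ 2^{f(n)} : n < ω) such that every x ∈ X satisfies s_n ⊆ x for infinitely many n. Then X has the Rothberger property C''. -/
/-- g eventually dominates f. -/
def EvDom (g f : ℕ → ℕ) : Prop := ∀ᶠ n in Filter.atTop, f n ≤ g n

/-- The bounding number 𝔟: the least cardinality of a family in ℕ^ℕ unbounded
with respect to eventual domination. -/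
noncomputable def boundingNumber : Cardinal :=
  sInf {c | ∃ F : Set (ℕ → ℕ), Cardinal.mk F = c ∧ ¬ ∃ g, ∀ f ∈ F, EvDom g f}

/-- X ⊆ 2^ω has the Rothberger property C''. -/
def Rothberger (X : Set (ℕ → Bool)) : Prop :=
  ∀ 𝒰 : ℕ → Set (Set (ℕ → Bool)), (∀ n, (∀ U ∈ 𝒰 n, IsOpen U) ∧ X ⊆ ⋃₀ 𝒰 n) →
    ∃ U : ℕ → Set (ℕ → Bool), (∀ n, U n ∈ 𝒰 n) ∧ X ⊆ ⋃ n, U n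

/-- Assume 𝔟 > ω₁.  If X ⊆ 2^ω has size ω₁ and for every f : ℕ → ℕ there is a
sequence s_n ∈ 2^{f(n)} such that every x ∈ X satisfies s_n ⊆ x for infinitely
many n, then X has the Rothberger property C''. -/
theorem stmt8 (hb : Cardinal.aleph 1 < boundingNumber)
    (X : Set (ℕ → Bool)) (hX : Cardinal.mk X = Cardinal.aleph 1)
    (hio : ∀ f : ℕ → ℕ, ∃ s : (n : ℕ) → Fin (f n) → Bool,
      ∀ x ∈ X, {n : ℕ | ∀ i : Fin (f n), x i = s n i}.Infinite) :
    Rothberger X := by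
  intro 𝒰 h𝒰
  have hXne : X.Nonempty := by
    rcases Set.eq_empty_or_nonempty X with h | h
    · exfalso
      rw [h, Cardinal.mk_emptyCollection] at hX
      have := Cardinal.aleph0_le_aleph 1
      rw [← hX] at this
      simp at this
      exact Cardinal.aleph0_ne_zero this
    · exact h
  -- for each x ∈ X and n, there is k and U ∈ 𝒰 n with cylinder x k ⊆ U
  have key : ∀ x ∈ X, ∀ n : ℕ, ∃ k : ℕ, ∃ U ∈ 𝒰 n, PiNat.cylinder x k ⊆ U := by
    intro x hx n
    obtain ⟨U, hUm, hxU⟩ := (h𝒰 n).2 hx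
    obtain ⟨v, ⟨y, k, rfl⟩, hxv, hvU⟩ :=
      (PiNat.isTopologicalBasis_cylinders (fun _ : ℕ => Bool)).exists_subset_of_mem_open hxU
        ((h𝒰 n).1 U hUm)
    refine ⟨k, U, hUm, ?_⟩
    rw [PiNat.mem_cylinder_iff_eq] at hxv
    rwa [hxv]
  choose! f hf using key
  -- the family {f x : x ∈ X} is bounded since |X| < 𝔟
  have hbd : ∃ g, ∀ h ∈ f '' X, EvDom g h := by
    by_contra hcon
    have : boundingNumber ≤ Cardinal.mk (f '' X) :=
      csInf_le' ⟨f '' X, rfl, hcon⟩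
    have h2 : Cardinal.mk (f '' X) ≤ Cardinal.mk X := Cardinal.mk_image_le
    rw [hX] at h2
    exact absurd (this.trans h2) (not_le.2 hb)
  obtain ⟨g, hg⟩ := hbd
  obtain ⟨s, hs⟩ := hio g
  -- choose U n
  have hch : ∀ n : ℕ, ∃ U, U ∈ 𝒰 n ∧
      ((∃ V ∈ 𝒰 n, {y : ℕ → Bool | ∀ i : Fin (g n), y i = s n i} ⊆ V) →
        {y : ℕ → Bool | ∀ i : Fin (g n), y i = s n i} ⊆ U) := by
    intro n
    by_cases hex : ∃ V ∈ 𝒰 n, {y : ℕ → Bool | ∀ i : Fin (g n), y i = s n i} ⊆ V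
    · obtain ⟨V, hV, hsub⟩ := hex
      exact ⟨V, hV, fun _ => hsub⟩
    · obtain ⟨x0, hx0⟩ := hXne
      obtain ⟨V, hV, _⟩ := (h𝒰 n).2 hx0
      exact ⟨V, hV, fun h => absurd h hex⟩
  choose U hU1 hU2 using hch
  refine ⟨U, hU1, ?_⟩
  intro x hx
  have hdom : EvDom g (f x) := hg _ ⟨x, hx, rfl⟩
  obtain ⟨N, hN⟩ := Filter.eventually_atTop.1 hdom
  have hinf := hs x hx
  obtain ⟨n, hn_mem, hn_ge⟩ := hinf.exists_gt N
  -- hn_mem? exists_gt gives element > N; check API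
  have hxs : ∀ i : Fin (g n), x i = s n i := hn_mem
  have hfl : f x n ≤ g n := hN n (le_of_lt hn_ge)
  -- cylinder s_n ⊆ cylinder x (f x n) ⊆ some V ∈ 𝒰 n
  have hsub : {y : ℕ → Bool | ∀ i : Fin (g n), y i = s n i} ⊆ U n := by
    apply hU2 n
    obtain ⟨V, hV, hVsub⟩ := hf x hx n
    refine ⟨V, hV, fun y hy => hVsub ?_⟩
    intro i hi
    have hig : i < g n := lt_of_lt_of_le hi hfl
    have := hy ⟨i, hig⟩
    have := hxs ⟨i, hig⟩
    simp_all
  exact Set.mem_iUnion.2 ⟨n, hsub fun i => hxs i⟩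
end

section
/- If 𝔟 = ω₁ then there exists an uncountable set X ⊆ ℝ concentrated on the rationals ℚ, i.e., X \ U is countable for every open U ⊇ ℚ. -/
namespace Stmt10Aux

/-- countable families are dominated -/
lemma countable_dominated (S : Set (ℕ → ℕ)) (hS : S.Countable) :
    ∃ g, ∀ f ∈ S, EvDom g f := by
  rcases S.eq_empty_or_nonempty with h | h
  · exact ⟨id, by simp [h]⟩
  · obtain ⟨u, hu⟩ := (Set.countable_iff_exists_surjective h).mp hS
    refine ⟨fun n => (Finset.range (n+1)).sup (fun k => (u k : ℕ → ℕ) n), ?_⟩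
    intro f hf
    obtain ⟨k, hk⟩ := hu ⟨f, hf⟩
    refine Filter.eventually_atTop.2 ⟨k, fun n hn => ?_⟩
    have hm : k ∈ Finset.range (n+1) := Finset.mem_range.2 (by omega)
    have : (u k : ℕ → ℕ) n ≤ (Finset.range (n+1)).sup (fun k => (u k : ℕ → ℕ) n) :=
      Finset.le_sup (f := fun k => (u k : ℕ → ℕ) n) hm
    simpa [hk] using this


/-- position of the j-th binary digit used to encode f -/
def kk (f : ℕ → ℕ) (j : ℕ) : ℕ := j + 1 + ∑ i ∈ Finset.range (j + 1), f i

/-- term of the encoding series -/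
noncomputable def tt (f : ℕ → ℕ) (j : ℕ) : ℝ := ((2:ℝ)⁻¹) ^ (kk f j)

/-- the encoding map (ℕ → ℕ) → ℝ -/
noncomputable def ee (f : ℕ → ℕ) : ℝ := ∑' j, tt f j

lemma kk_ge_self (f : ℕ → ℕ) (j : ℕ) : j + 1 ≤ kk f j := by
  unfold kk; omega

lemma kk_ge_val (f : ℕ → ℕ) (j : ℕ) : f j ≤ kk f j := by
  have : f j ≤ ∑ i ∈ Finset.range (j + 1), f i :=
    Finset.single_le_sum (fun i _ => Nat.zero_le _) (Finset.self_mem_range_succ j)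
  unfold kk; omega

lemma kk_add (f : ℕ → ℕ) (n i : ℕ) : kk f n + i ≤ kk f (n + i) := by
  have h : ∑ m ∈ Finset.range (n + 1), f m ≤ ∑ m ∈ Finset.range (n + i + 1), f m :=
    Finset.sum_le_sum_of_subset (Finset.range_subset_range.2 (by omega))
  unfold kk; omega

lemma tt_pos (f : ℕ → ℕ) (j : ℕ) : 0 < tt f j := by unfold tt; positivity

lemma tt_le (f : ℕ → ℕ) (j : ℕ) : tt f j ≤ ((2:ℝ)⁻¹) ^ j :=
  pow_le_pow_of_le_one (by norm_num) (by norm_num) (by have := kk_ge_self f j; omega)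

lemma summable_tt (f : ℕ → ℕ) : Summable (tt f) :=
  Summable.of_nonneg_of_le (fun j => (tt_pos f j).le) (tt_le f)
    (summable_geometric_of_lt_one (by norm_num) (by norm_num))

lemma tsum_geom_inv_two : ∑' i : ℕ, ((2:ℝ)⁻¹) ^ i = 2 := by
  rw [tsum_geometric_of_lt_one (by norm_num) (by norm_num)]; norm_num

/-- tail bound -/
lemma tail_le (f : ℕ → ℕ) (n : ℕ) : ∑' i, tt f (i + n) ≤ 2 * tt f n := by
  have h1 : ∀ i, tt f (i + n) ≤ tt f n * ((2:ℝ)⁻¹) ^ i := by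
    intro i
    have : kk f n + i ≤ kk f (i + n) := by
      have := kk_add f n i; rwa [Nat.add_comm n i] at this
    calc tt f (i + n) ≤ ((2:ℝ)⁻¹) ^ (kk f n + i) :=
          pow_le_pow_of_le_one (by norm_num) (by norm_num) this
      _ = tt f n * ((2:ℝ)⁻¹) ^ i := by rw [pow_add]; rfl
  calc ∑' i, tt f (i + n) ≤ ∑' i, tt f n * ((2:ℝ)⁻¹) ^ i := by
        refine Summable.tsum_le_tsum h1 ((summable_tt f).comp_injective (add_left_injective n)) ?_
        exact (summable_geometric_of_lt_one (by norm_num) (by norm_num)).mul_left _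
    _ = tt f n * 2 := by rw [tsum_mul_left, tsum_geom_inv_two]
    _ = 2 * tt f n := by ring

lemma ee_split (f : ℕ → ℕ) (n : ℕ) :
    ee f = (∑ j ∈ Finset.range n, tt f j) + ∑' i, tt f (i + n) := by
  rw [ee, ← Summable.sum_add_tsum_nat_add n (summable_tt f)]

lemma tail_ge (f : ℕ → ℕ) (n : ℕ) : tt f n < ∑' i, tt f (i + n) := by
  have hs : Summable fun i => tt f (i + n) :=
    (summable_tt f).comp_injective (add_left_injective n)
  have h2 : (∑ i ∈ Finset.range 2, tt f (i + n)) ≤ ∑' i, tt f (i + n) :=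
    Summable.sum_le_tsum _ (fun i _ => (tt_pos f _).le) hs
  have : tt f n + tt f (1 + n) ≤ ∑' i, tt f (i + n) := by
    simpa [Finset.sum_range_succ] using h2
  have := tt_pos f (1 + n)
  linarith

/-- kk only depends on values below j+1 -/
lemma kk_congr {f g : ℕ → ℕ} {n : ℕ} (h : ∀ i < n, f i = g i) {j : ℕ} (hj : j < n) :
    kk f j = kk g j := by
  unfold kk
  congr 1
  refine Finset.sum_congr rfl (fun i hi => ?_)
  exact h i (by have := Finset.mem_range.1 hi; omega)

lemma ee_lt {f g : ℕ → ℕ} {n : ℕ} (h : ∀ i < n, f i = g i) (hn : f n < g n) :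
    ee g < ee f := by
  have hhead : (∑ j ∈ Finset.range n, tt g j) = ∑ j ∈ Finset.range n, tt f j := by
    refine Finset.sum_congr rfl (fun j hj => ?_)
    unfold tt
    rw [kk_congr (fun i hi => (h i hi).symm) (Finset.mem_range.1 hj)]
  have hkk : kk f n + 1 ≤ kk g n := by
    have hsum : (∑ i ∈ Finset.range (n + 1), f i) + 1 ≤ ∑ i ∈ Finset.range (n + 1), g i := by
      have hc : ∑ i ∈ Finset.range n, f i = ∑ i ∈ Finset.range n, g i :=
        Finset.sum_congr rfl (fun i hi => h i (Finset.mem_range.1 hi))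
      rw [Finset.sum_range_succ, Finset.sum_range_succ, hc]
      omega
    unfold kk; omega
  have htg : 2 * tt g n ≤ tt f n := by
    have : tt g n ≤ ((2:ℝ)⁻¹) ^ (kk f n + 1) :=
      pow_le_pow_of_le_one (by norm_num) (by norm_num) hkk
    have h2 : ((2:ℝ)⁻¹) ^ (kk f n + 1) = tt f n * 2⁻¹ := by rw [pow_succ]; rfl
    rw [h2] at this
    unfold tt at *
    linarith
  have h1 : ∑' i, tt g (i + n) ≤ 2 * tt g n := tail_le g n
  have h2 : tt f n < ∑' i, tt f (i + n) := tail_ge f n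
  rw [ee_split f n, ee_split g n, hhead]
  have := tail_le g n
  linarith

lemma ee_injective : Function.Injective ee := by
  intro f g hfg
  by_contra hne
  have hx : ∃ n, f n ≠ g n := Function.ne_iff.1 hne
  classical
  let n := Nat.find hx
  have hmin : ∀ i < n, f i = g i := fun i hi => by
    by_contra hcon; exact Nat.find_min hx hi hcon
  have hn : f n ≠ g n := Nat.find_spec hx
  rcases lt_or_gt_of_ne hn with h | h
  · exact absurd hfg.symm (ne_of_lt (ee_lt hmin h))
  · exact absurd hfg (ne_of_lt (ee_lt (fun i hi => (hmin i hi).symm) h))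

/-- the head sum is rational -/
lemma head_rat (v : ℕ → ℕ) (n : ℕ) :
    ∃ q : ℚ, (q : ℝ) = ∑ j ∈ Finset.range n, tt v j := by
  refine ⟨∑ j ∈ Finset.range n, ((2:ℚ)⁻¹) ^ (kk v j), ?_⟩
  unfold tt
  push_cast
  rfl

lemma coord_bounded (C : Set ℝ) (hC : IsClosed C) (hq : ∀ q : ℚ, (q:ℝ) ∉ C) :
    ∀ n, ∃ B, ∀ x : ℕ → ℕ, ee x ∈ C → x n ≤ B := by
  intro n
  induction n using Nat.strong_induction_on with
  | _ n IH =>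
  classical
  choose B hB using fun m : Fin n => IH m m.2
  by_contra hcon
  push_neg at hcon
  -- a tuple with unbounded continuations
  have hA : (Set.univ.pi fun i : Fin n => Set.Iic (B i)).Finite :=
    Set.Finite.pi fun i => Set.finite_Iic _
  have hclaim : ∃ v : Fin n → ℕ,
      ∀ M, ∃ x : ℕ → ℕ, ee x ∈ C ∧ (∀ i : Fin n, x i = v i) ∧ M ≤ x n := by
    by_contra hcl
    push_neg at hcl
    choose M hM using hcl
    obtain ⟨x, hxC, hxn⟩ := hcon (hA.toFinset.sup M)
    have hvA : (fun i : Fin n => x i) ∈ Set.univ.pi fun i : Fin n => Set.Iic (B i) :=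
      fun i _ => hB i x hxC
    have h1 := hM (fun i : Fin n => x i) x hxC (fun i => rfl)
    have h2 : M (fun i : Fin n => x i) ≤ hA.toFinset.sup M :=
      Finset.le_sup (hA.mem_toFinset.2 hvA)
    omega
  obtain ⟨v, hv⟩ := hclaim
  set v' : ℕ → ℕ := fun i => if h : i < n then v ⟨i, h⟩ else 0 with hv'
  set L : ℝ := ∑ j ∈ Finset.range n, tt v' j with hL
  choose xs hxsC hxsv hxsn using hv
  -- each xs M agrees with v' below n
  have hagree : ∀ M, ∀ i < n, xs M i = v' i := by
    intro M i hi
    simp only [hv', dif_pos hi]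
    exact hxsv M ⟨i, hi⟩
  have hhead : ∀ M, (∑ j ∈ Finset.range n, tt (xs M) j) = L := by
    intro M
    refine Finset.sum_congr rfl fun j hj => ?_
    unfold tt
    rw [kk_congr (hagree M) (Finset.mem_range.1 hj)]
  have hdist : ∀ M, |ee (xs M) - L| ≤ 2 * ((2:ℝ)⁻¹) ^ M := by
    intro M
    have h1 : ee (xs M) - L = ∑' i, tt (xs M) (i + n) := by
      rw [ee_split (xs M) n, hhead M]; ring
    have h2 : (0:ℝ) < ∑' i, tt (xs M) (i + n) :=
      lt_trans (tt_pos _ _) (tail_ge (xs M) n)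
    have h3 : ∑' i, tt (xs M) (i + n) ≤ 2 * tt (xs M) n := tail_le (xs M) n
    have h4 : tt (xs M) n ≤ ((2:ℝ)⁻¹) ^ M := by
      unfold tt
      refine pow_le_pow_of_le_one (by norm_num) (by norm_num) ?_
      exact le_trans (hxsn M) (kk_ge_val (xs M) n)
    rw [h1, abs_of_pos h2]
    linarith
  have hlim : Filter.Tendsto (fun M => ee (xs M)) Filter.atTop (nhds L) := by
    rw [tendsto_iff_dist_tendsto_zero]
    have hub : Filter.Tendsto (fun M : ℕ => 2 * ((2:ℝ)⁻¹) ^ M) Filter.atTop (nhds 0) := by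
      have := tendsto_pow_atTop_nhds_zero_of_lt_one (r := (2:ℝ)⁻¹) (by norm_num) (by norm_num)
      simpa using this.const_mul 2
    refine squeeze_zero (fun M => dist_nonneg) (fun M => ?_) hub
    rw [Real.dist_eq]
    exact hdist M
  have hLC : L ∈ C := hC.mem_of_tendsto hlim (Filter.Eventually.of_forall hxsC)
  obtain ⟨q, hqL⟩ := head_rat v' n
  exact hq q (hqL ▸ hLC)

lemma evdom_trans {g₂ g₁ f : ℕ → ℕ} (h2 : EvDom g₂ g₁) (h1 : EvDom g₁ f) : EvDom g₂ f :=
  (h2.and h1).mono fun _ ⟨a, b⟩ => le_trans b a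

end Stmt10Aux

open Stmt10Aux

/-- If 𝔟 = ω₁ then there is an uncountable set of reals concentrated on the
rationals: X \ U is countable for every open U ⊇ ℚ. -/
theorem stmt10 (hb : boundingNumber = Cardinal.aleph 1) :
    ∃ X : Set ℝ, ¬ X.Countable ∧
      ∀ U : Set ℝ, IsOpen U → Set.range ((↑) : ℚ → ℝ) ⊆ U → (X \ U).Countable := by
  classical
  -- the defining set of 𝔟 is nonempty
  have hne : {c | ∃ F : Set (ℕ → ℕ), Cardinal.mk F = c ∧ ¬ ∃ g, ∀ f ∈ F, EvDom g f}.Nonempty := by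
    refine ⟨Cardinal.mk (Set.univ : Set (ℕ → ℕ)), Set.univ, rfl, ?_⟩
    rintro ⟨g, hg⟩
    have h1 : EvDom g (fun n => g n + 1) := hg _ (Set.mem_univ _)
    obtain ⟨n, hn⟩ := h1.exists
    simp at hn
  have hmem := csInf_mem hne
  rw [show sInf {c | ∃ F : Set (ℕ → ℕ), Cardinal.mk F = c ∧ ¬ ∃ g, ∀ f ∈ F, EvDom g f}
      = boundingNumber from rfl, hb] at hmem
  obtain ⟨F, hF, hunb⟩ := hmem
  -- index the family by ω₁
  set I := (Cardinal.aleph 1).ord.ToType with hI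
  have hmkI : Cardinal.mk I = Cardinal.aleph 1 := by
    rw [hI, Cardinal.mk_toType, Cardinal.card_ord]
  obtain ⟨eqv⟩ : Nonempty (F ≃ I) := Cardinal.eq.1 (hF.trans hmkI.symm)
  set h : I → (ℕ → ℕ) := fun α => ((eqv.symm α : F) : ℕ → ℕ) with hdefh
  have hsurj : ∀ x ∈ F, ∃ α : I, h α = x := by
    intro x hx
    exact ⟨eqv ⟨x, hx⟩, by simp [hdefh]⟩
  -- countable initial segments
  have hIic : ∀ α : I, (Set.Iic α).Countable := by
    intro α
    have h1 : Cardinal.mk (Set.Iio α) < Cardinal.aleph 1 := Cardinal.mk_Iio_ord_toType α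
    have h2 : (Set.Iio α).Countable := (Cardinal.countable_iff_lt_aleph_one _).2 h1
    rw [← Set.Iio_insert]
    exact h2.insert α
  -- build the scale
  have hstep : ∀ α : I, ∃ g, ∀ β ≤ α, EvDom g (h β) := by
    intro α
    obtain ⟨g, hg⟩ := countable_dominated (h '' Set.Iic α) ((hIic α).image h)
    exact ⟨g, fun β hβ => hg _ ⟨β, hβ, rfl⟩⟩
  choose f hf using hstep
  refine ⟨ee '' Set.range f, ?_, ?_⟩
  · -- uncountable
    intro hX
    have h1 : (Set.range f).Countable :=
      (hX.preimage ee_injective).mono (Set.subset_preimage_image ee _)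
    obtain ⟨g, hg⟩ := countable_dominated (Set.range f) h1
    refine hunb ⟨g, fun x hx => ?_⟩
    obtain ⟨α, hα⟩ := hsurj x hx
    exact hα ▸ evdom_trans (hg (f α) ⟨α, rfl⟩) (hf α α le_rfl)
  · -- concentrated
    intro U hU hQU
    have hC : IsClosed Uᶜ := hU.isClosed_compl
    have hq : ∀ q : ℚ, (q:ℝ) ∉ Uᶜ := fun q hqC => hqC (hQU ⟨q, rfl⟩)
    choose B hB using coord_bounded Uᶜ hC hq
    set T : Set I := {α : I | ee (f α) ∈ Uᶜ} with hT
    have hTc : T.Countable := by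
      by_contra hTu
      have hub : ∀ γ : I, ∃ β ∈ T, γ ≤ β := by
        intro γ
        by_contra hcon
        push_neg at hcon
        exact hTu ((hIic γ).mono fun β hβ => le_of_lt (hcon β hβ))
      refine hunb ⟨B, fun x hx => ?_⟩
      obtain ⟨γ, hγ⟩ := hsurj x hx
      obtain ⟨β, hβT, hγβ⟩ := hub γ
      have h2 : EvDom B (f β) := Filter.Eventually.of_forall fun n => hB n (f β) hβT
      exact hγ ▸ evdom_trans h2 (hf β γ hγβ)
    have hsub : ee '' Set.range f \ U ⊆ ee '' (f '' T) := by
      rintro x ⟨⟨y, ⟨α, rfl⟩, rfl⟩, hxU⟩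
      exact ⟨f α, ⟨α, hxU, rfl⟩, rfl⟩
    exact Set.Countable.mono hsub ((hTc.image f).image ee)
end

section
/- If there exists an uncountable strong measure zero subset of ℝ, then there exists a strong measure zero set X ⊆ 2^ω of cardinality ω₁ such that for every f : ℕ → ℕ there exists (s_n ∈ 2^{f(n)} : n < ω) with: for every x ∈ X, s_n ⊆ x for infinitely many n. -/
/-- X ⊆ ℝ has strong measure zero. -/
def SMZreal (X : Set ℝ) : Prop :=
  ∀ ε : ℕ → ℝ, (∀ n, 0 < ε n) →
    ∃ I : ℕ → Set ℝ, (∀ n, ∃ a b : ℝ, I n = Set.Ioo a b ∧ b - a < ε n) ∧ X ⊆ ⋃ n, I n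

namespace SMZaux

lemma myediv_ediv (a : ℤ) {b c : ℤ} (hb : 0 < b) (hc : 0 < c) :
    a / b / c = a / (b * c) := by
  have hbc : 0 < b * c := mul_pos hb hc
  have h1 : a = b * c * (a / (b * c)) + a % (b * c) := (Int.mul_ediv_add_emod _ _).symm
  have hs0 : 0 ≤ a % (b * c) := Int.emod_nonneg a hbc.ne'
  have hs1 : a % (b * c) < b * c := Int.emod_lt_of_pos a hbc
  set q := a / (b * c) with hq
  set s := a % (b * c) with hsdef
  have h2 : a / b = s / b + c * q := by
    rw [show a = s + b * (c * q) by linarith [h1]]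
    rw [Int.add_mul_ediv_left s (c * q) hb.ne']
  have h3 : s / b / c = 0 := by
    apply Int.ediv_eq_zero_of_lt (Int.ediv_nonneg hs0 hb.le)
    rw [Int.ediv_lt_iff_lt_mul hb]
    linarith [hs1]
  rw [h2, Int.add_mul_ediv_left (s / b) q hc.ne', h3, zero_add]

noncomputable def phi (r : ℝ) (n : ℕ) : Bool := decide (⌊r * 2^(n+1)⌋ % 2 = 1)

lemma floor_half (x : ℝ) : ⌊x / 2⌋ = ⌊x⌋ / 2 := by
  have h0 := Int.floor_le x
  have h1 := Int.lt_floor_add_one x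
  have h2 := Int.emod_two_eq ⌊x⌋
  have h3 := Int.mul_ediv_add_emod ⌊x⌋ 2
  have hlo : 2 * (⌊x⌋ / 2) ≤ ⌊x⌋ := by omega
  have hhi : ⌊x⌋ ≤ 2 * (⌊x⌋ / 2) + 1 := by omega
  have hlo' : (2 : ℝ) * (⌊x⌋ / 2 : ℤ) ≤ ⌊x⌋ := by exact_mod_cast hlo
  have hhi' : (⌊x⌋ : ℝ) ≤ 2 * (⌊x⌋ / 2 : ℤ) + 1 := by exact_mod_cast hhi
  rw [Int.floor_eq_iff]
  constructor
  · push_cast; linarith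
  · push_cast; linarith

lemma floor_halve (r : ℝ) (m : ℕ) : ⌊r * 2^m⌋ = ⌊r * 2^(m+1)⌋ / 2 := by
  rw [show r * 2^m = r * 2^(m+1) / 2 by ring, floor_half]

lemma floor_pow_div (r : ℝ) (m k : ℕ) : ⌊r * 2^m⌋ = ⌊r * 2^(m+k)⌋ / 2^k := by
  induction k with
  | zero => simp
  | succ k ih =>
    rw [ih, floor_halve r (m+k), show m + (k+1) = (m+k)+1 from rfl,
      myediv_ediv _ (by norm_num) (by positivity)]
    congr 1
    rw [pow_succ]
    ring

lemma phi_eq_of_lt (r : ℝ) {M i : ℕ} (h : i < M) :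
    phi r i = decide ((⌊r * 2^M⌋ / 2^(M - (i+1))) % 2 = 1) := by
  unfold phi
  rw [floor_pow_div r (i+1) (M - (i+1)), show i+1+(M-(i+1)) = M by omega]

lemma floor_two_values {a b r : ℝ} {M : ℕ} (hr : r ∈ Set.Ioo a b)
    (hlen : b - a < 1/2^M) :
    ⌊r * 2^M⌋ = ⌊a * 2^M⌋ ∨ ⌊r * 2^M⌋ = ⌊a * 2^M⌋ + 1 := by
  obtain ⟨h1, h2⟩ := hr
  have hp : (0:ℝ) < 2^M := by positivity
  have hA : a * 2^M < r * 2^M := by nlinarith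
  have hB : r * 2^M < a * 2^M + 1 := by
    have hba : b * 2^M < a * 2^M + 1 := by
      have := mul_lt_mul_of_pos_right hlen hp
      rw [div_mul_eq_mul_div, one_mul, div_self (ne_of_gt hp)] at this
      linarith
    nlinarith
  have l1 : ⌊a * 2^M⌋ ≤ ⌊r * 2^M⌋ := Int.floor_le_floor (le_of_lt hA)
  have h5 : (⌊r * 2^M⌋ : ℝ) < (⌊a * 2^M⌋ : ℝ) + 2 := by
    have h4 : (⌊r * 2^M⌋ : ℝ) ≤ r * 2^M := Int.floor_le _
    have h6 := Int.lt_floor_add_one (a * 2^M)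
    linarith
  have l2 : ⌊r * 2^M⌋ < ⌊a * 2^M⌋ + 2 := by exact_mod_cast h5
  omega

/-- Key covering lemma: any SMZ set of reals has its `phi`-image covered by
prescribed-length cylinders. -/
lemma cover {Z : Set ℝ} (hZ : SMZreal Z) (f : ℕ → ℕ) :
    ∃ s : (n : ℕ) → Fin (f n) → Bool,
      ∀ r ∈ Z, ∃ m, ∀ i : Fin (f m), phi r i = s m i := by
  set M : ℕ → ℕ := fun n => max (f (2*n)) (f (2*n+1)) with hM
  obtain ⟨I, hI, hcov⟩ := hZ (fun n => 1/2^(M n)) (fun n => by positivity)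
  choose a b hIab hlen using hI
  refine ⟨fun m i =>
    decide ((⌊a (m/2) * 2^(M (m/2))⌋ + (m % 2 : ℤ)) / 2^(M (m/2) - ((i:ℕ)+1)) % 2 = 1), ?_⟩
  intro r hr
  obtain ⟨n, hn⟩ : ∃ n, r ∈ I n := Set.mem_iUnion.mp (hcov hr)
  rw [hIab n] at hn
  rcases floor_two_values hn (hlen n) with h | h
  · refine ⟨2*n, fun i => ?_⟩
    have hiM : (i:ℕ) < M n := lt_of_lt_of_le i.2 (le_max_left _ _)
    rw [phi_eq_of_lt r hiM]
    have e1 : 2*n/2 = n := by omega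
    have e2 : ((2*n : ℕ) : ℤ) % 2 = 0 := by omega
    rw [h]
    simp only [e1, e2, add_zero]
  · refine ⟨2*n+1, fun i => ?_⟩
    have hiM : (i:ℕ) < M n := lt_of_lt_of_le i.2 (le_max_right _ _)
    rw [phi_eq_of_lt r hiM]
    have e1 : (2*n+1)/2 = n := by omega
    have e2 : ((2*n+1 : ℕ) : ℤ) % 2 = 1 := by omega
    rw [h]
    simp only [e1, e2]

lemma smz_mono {Y Z : Set ℝ} (h : SMZreal Z) (hYZ : Y ⊆ Z) : SMZreal Y := by
  intro ε hε
  obtain ⟨I, h1, h2⟩ := h ε hε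
  exact ⟨I, h1, hYZ.trans h2⟩

lemma smz_translate {Z : Set ℝ} (c : ℝ) (h : SMZreal Z) :
    SMZreal ((fun x => x + c) '' Z) := by
  intro ε hε
  obtain ⟨I, h1, h2⟩ := h ε hε
  choose a b hIab hlen using h1
  refine ⟨fun n => Set.Ioo (a n + c) (b n + c),
    fun n => ⟨a n + c, b n + c, rfl, by linarith [hlen n]⟩, ?_⟩
  rintro x ⟨z, hz, rfl⟩
  obtain ⟨n, hn⟩ := Set.mem_iUnion.mp (h2 hz)
  rw [hIab n] at hn
  refine Set.mem_iUnion.mpr ⟨n, ?_⟩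
  have h1 := hn.1
  have h2 := hn.2
  constructor <;> · dsimp only; linarith

lemma phi_injOn : Set.InjOn phi (Set.Ico (0:ℝ) 1) := by
  intro r hr r' hr' hphi
  have key : ∀ m : ℕ, ⌊r * 2^m⌋ = ⌊r' * 2^m⌋ := by
    intro m
    induction m with
    | zero =>
      simp only [pow_zero, mul_one]
      rw [Int.floor_eq_zero_iff.mpr (by exact ⟨hr.1, hr.2⟩),
        Int.floor_eq_zero_iff.mpr (by exact ⟨hr'.1, hr'.2⟩)]
    | succ m ih =>
      have b1 : ⌊r * 2^(m+1)⌋ % 2 = ⌊r' * 2^(m+1)⌋ % 2 := by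
        have := congrFun hphi m
        unfold phi at this
        have h2 := Int.emod_two_eq ⌊r * 2^(m+1)⌋
        have h3 := Int.emod_two_eq ⌊r' * 2^(m+1)⌋
        rcases h2 with h2 | h2 <;> rcases h3 with h3 | h3 <;>
          simp [h2, h3] at this ⊢
      have d1 := floor_halve r m
      have d2 := floor_halve r' m
      have e1 := Int.mul_ediv_add_emod ⌊r * 2^(m+1)⌋ 2
      have e2 := Int.mul_ediv_add_emod ⌊r' * 2^(m+1)⌋ 2
      omega
  by_contra hne
  have habs : 0 < |r - r'| := abs_pos.mpr (sub_ne_zero.mpr hne)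
  obtain ⟨m, hm⟩ := pow_unbounded_of_one_lt (R := ℝ) (1 / |r - r'|) one_lt_two
  have hm' : 1 / |r - r'| < 2^m := hm
  have hp : (0:ℝ) < 2^m := by positivity
  have h1 : |r - r'| * 2^m < 1 := by
    have hf1 := Int.floor_le (r * 2^m)
    have hf2 := Int.lt_floor_add_one (r * 2^m)
    have hf3 := Int.floor_le (r' * 2^m)
    have hf4 := Int.lt_floor_add_one (r' * 2^m)
    rw [key m] at hf1 hf2
    rw [← abs_of_pos hp, ← abs_mul, sub_mul, abs_sub_lt_iff]
    constructor <;> nlinarith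
  rw [div_lt_iff₀ habs] at hm'
  nlinarith

end SMZaux

open SMZaux in
/-- If there exists an uncountable strong measure zero subset of ℝ, then there
exists a strong measure zero set X ⊆ 2^ω of cardinality ω₁ such that for every
f : ℕ → ℕ there is a sequence s_n ∈ 2^{f(n)} with: every x ∈ X satisfies
s_n ⊆ x for infinitely many n. -/
theorem stmt13 (h : ∃ X : Set ℝ, ¬ X.Countable ∧ SMZreal X) :
    ∃ X : Set (ℕ → Bool), Cardinal.mk X = Cardinal.aleph 1 ∧
      (∀ f : ℕ → ℕ, ∃ s : (n : ℕ) → Fin (f n) → Bool,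
        X ⊆ ⋃ n, {x : ℕ → Bool | ∀ i : Fin (f n), x i = s n i}) ∧
      (∀ f : ℕ → ℕ, ∃ s : (n : ℕ) → Fin (f n) → Bool,
        ∀ x ∈ X, {n : ℕ | ∀ i : Fin (f n), x i = s n i}.Infinite) := by
  obtain ⟨X₀, hX₀c, hX₀s⟩ := h
  -- some unit interval piece is uncountable
  have hpiece : ∃ k : ℤ, ¬ (X₀ ∩ Set.Ico (k : ℝ) (k+1)).Countable := by
    by_contra hall
    push_neg at hall
    apply hX₀c
    have : X₀ = ⋃ k : ℤ, X₀ ∩ Set.Ico (k : ℝ) (k+1) := by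
      ext x
      simp only [Set.mem_iUnion, Set.mem_inter_iff, Set.mem_Ico]
      constructor
      · intro hx
        exact ⟨⌊x⌋, hx, Int.floor_le x, by push_cast; exact Int.lt_floor_add_one x⟩
      · rintro ⟨k, hk, -⟩; exact hk
    rw [this]
    exact Set.countable_iUnion hall
  obtain ⟨k, hk⟩ := hpiece
  -- translate into [0,1)
  set Z : Set ℝ := (fun x => x + (-(k:ℝ))) '' (X₀ ∩ Set.Ico (k : ℝ) (k+1)) with hZdef
  have hZsub : Z ⊆ Set.Ico (0:ℝ) 1 := by
    rintro x ⟨z, ⟨-, hz1, hz2⟩, rfl⟩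
    constructor <;> · dsimp only; push_cast; linarith
  have hZc : ¬ Z.Countable := by
    intro hc
    apply hk
    have : X₀ ∩ Set.Ico (k : ℝ) (k+1) = (fun x => x + (k:ℝ)) '' Z := by
      rw [hZdef, Set.image_image]
      simp
    rw [this]
    exact hc.image _
  have hZsmz : SMZreal Z := smz_translate _ (smz_mono hX₀s Set.inter_subset_left)
  -- pick a subset of size ℵ₁
  have hle : Cardinal.aleph 1 ≤ Cardinal.mk Z := by
    rw [← not_lt]
    intro hlt
    exact hZc ((Cardinal.countable_iff_lt_aleph_one Z).mpr hlt)
  obtain ⟨Y, hYZ, hYcard⟩ := Cardinal.le_mk_iff_exists_subset.mp hle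
  have hYsmz : SMZreal Y := smz_mono hZsmz hYZ
  have hYsub : Y ⊆ Set.Ico (0:ℝ) 1 := hYZ.trans hZsub
  refine ⟨phi '' Y, ?_, ?_, ?_⟩
  · rw [Cardinal.mk_image_eq_of_injOn phi Y (phi_injOn.mono hYsub), hYcard]
  · intro f
    obtain ⟨s, hs⟩ := cover hYsmz f
    refine ⟨s, ?_⟩
    rintro x ⟨r, hr, rfl⟩
    obtain ⟨m, hm⟩ := hs r hr
    exact Set.mem_iUnion.mpr ⟨m, hm⟩
  · intro f
    have hcov : ∀ k : ℕ, ∃ s : (n : ℕ) → Fin (f (Nat.pair k n)) → Bool,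
        ∀ r ∈ Y, ∃ m, ∀ i : Fin (f (Nat.pair k m)), phi r i = s m i :=
      fun k => cover hYsmz (fun n => f (Nat.pair k n))
    choose s hs using hcov
    set t : ℕ → ℕ → ℕ → Bool := fun k n j =>
      if h : j < f (Nat.pair k n) then s k n ⟨j, h⟩ else false with ht
    refine ⟨fun m i => t m.unpair.1 m.unpair.2 i.1, ?_⟩
    rintro x ⟨r, hr, rfl⟩
    have hchoice : ∀ k : ℕ, ∃ m, ∀ i : Fin (f (Nat.pair k m)), phi r i = s k m i :=
      fun k => hs k r hr
    choose g hg using hchoice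
    apply Set.infinite_of_injective_forall_mem
      (f := fun k : ℕ => Nat.pair k (g k))
    · intro k₁ k₂ he
      have := congrArg (fun m => m.unpair.1) he
      simpa [Nat.unpair_pair] using this
    · intro k
      simp only [Set.mem_setOf_eq]
      intro i
      show phi r ↑i = t (Nat.pair k (g k)).unpair.1 (Nat.pair k (g k)).unpair.2 i.1
      rw [Nat.unpair_pair]
      rw [ht]
      simp only [dif_pos i.2]
      exact hg k i
end

section
/- Let X ⊆ 2^ω and g : ℕ → ℕ be such that |{ x↾g(n) : x ∈ X }| > n for all n. Let h : ℕ → ℕ satisfy h(n) > g(n) for all n, and let 𝒰_h = { C_F : ∃n, F ⊆ 2^{h(n)}, |F| ≤ n } with C_F = { x : x↾h(n) ∈ F }. Then no single member of 𝒰_h contains X, but 𝒰_h is an ω-cover of 2^ω (assuming h(n) > 2^n for all n). -/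
/-!
If `X ⊆ C_F` with `F ⊆ 2^{h(n)}` and `|F| ≤ n`, then `X` has at most `n` restrictions at level
`h(n)`, hence at most `n` at the lower level `g(n)`, contradicting the growth assumption on `g`.
A finite set `A` is covered by `C_F` for `F` the set of restrictions of `A` at level `h(|A|)`.
Finally `2^ω ∈ 𝒰_h` would in particular contain `X`.
-/

/-- The family 𝒰_h of sets C_F = {x : x↾h(n) ∈ F} for F ⊆ 2^{h(n)}, |F| ≤ n. -/
def UFam (h : ℕ → ℕ) : Set (Set (ℕ → Bool)) :=
  {C | ∃ (n : ℕ) (F : Set (Fin (h n) → Bool)), F.ncard ≤ n ∧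
    C = {x : ℕ → Bool | (fun i : Fin (h n) => x i) ∈ F}}

def restrictFin {α : Type*} (m : ℕ) (x : ℕ → α) : Fin m → α := fun i => x i

section Restriction

variable {α : Type*} [Finite α]

theorem ncard_image_restrictFin_mono (X : Set (ℕ → α)) {m k : ℕ} (hmk : m ≤ k) :
    (restrictFin m '' X).ncard ≤ (restrictFin k '' X).ncard := by
  have hcomp : restrictFin m = (fun f : Fin k → α => fun i => f (Fin.castLE hmk i)) ∘
      restrictFin (α := α) k := rfl
  rw [hcomp, Set.image_comp]
  exact Set.ncard_image_le (Set.toFinite _)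

theorem ncard_image_restrictFin_le_of_subset {X : Set (ℕ → α)} {m : ℕ} {F : Set (Fin m → α)}
    (hX : X ⊆ {x | restrictFin m x ∈ F}) : (restrictFin m '' X).ncard ≤ F.ncard := by
  refine Set.ncard_le_ncard ?_ (Set.toFinite F)
  rintro _ ⟨x, hx, rfl⟩
  exact hX hx

end Restriction

theorem not_subset_of_mem_UFam {X : Set (ℕ → Bool)} {g h : ℕ → ℕ}
    (hg : ∀ n, n < (restrictFin (g n) '' X).ncard) (hgh : ∀ n, g n < h n) :
    ∀ C ∈ UFam h, ¬ X ⊆ C := by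
  rintro C ⟨n, F, hF, rfl⟩ hXC
  have hXF : (restrictFin (h n) '' X).ncard ≤ n :=
    (ncard_image_restrictFin_le_of_subset hXC).trans hF
  have := ncard_image_restrictFin_mono X (hgh n).le
  exact (hg n).not_ge (this.trans hXF)

theorem exists_mem_UFam_superset_of_finite (h : ℕ → ℕ) {A : Set (ℕ → Bool)} (hA : A.Finite) :
    ∃ C ∈ UFam h, A ⊆ C :=
  ⟨{x | restrictFin (h A.ncard) x ∈ restrictFin (h A.ncard) '' A},
    ⟨A.ncard, _, Set.ncard_image_le hA, rfl⟩, fun x hx => ⟨x, hx, rfl⟩⟩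

theorem stmt16_general (X : Set (ℕ → Bool)) (g h : ℕ → ℕ)
    (hg : ∀ n, n < ((fun x : ℕ → Bool => (fun i : Fin (g n) => x i)) '' X).ncard)
    (hgh : ∀ n, g n < h n) :
    (∀ C ∈ UFam h, ¬ X ⊆ C) ∧
      (∀ A : Set (ℕ → Bool), A.Finite → ∃ C ∈ UFam h, A ⊆ C) ∧
      (Set.univ : Set (ℕ → Bool)) ∉ UFam h := by
  have hX := not_subset_of_mem_UFam hg hgh
  exact ⟨hX, fun _ => exists_mem_UFam_superset_of_finite h,
    fun huniv => hX _ huniv (Set.subset_univ X)⟩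

/-- If X ⊆ 2^ω has more than n restrictions at level g(n) for each n, and
h(n) > g(n), h(n) > 2^n for all n, then no member of 𝒰_h contains X, but 𝒰_h is
an ω-cover of 2^ω. -/
theorem stmt16 (X : Set (ℕ → Bool)) (g h : ℕ → ℕ)
    (hg : ∀ n, n < ((fun x : ℕ → Bool => (fun i : Fin (g n) => x i)) '' X).ncard)
    (hgh : ∀ n, g n < h n) (h2 : ∀ n, 2 ^ n < h n) :
    (∀ C ∈ UFam h, ¬ X ⊆ C) ∧
      (∀ A : Set (ℕ → Bool), A.Finite → ∃ C ∈ UFam h, A ⊆ C) ∧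
      (Set.univ : Set (ℕ → Bool)) ∉ UFam h :=
  stmt16_general X g h hg hgh
end
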